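/- arXiv:1102.2424 — 9 statements merged into one kernel-verified Lean document; each statement's English description precedes it below -/
import Mathlib

section
/- Let n ≥ 2 be an integer and a_1, …, a_n real numbers. Then for any two distinct indices m, l ∈ {1, …, n} one has 2·a_m·a_l ≥ (∑_{i=1}^n a_i)²/(n−1) − ∑_{i=1}^n a_i². -/
theorem stmt_0 (n : ℕ) (hn : 2 ≤ n) (a : ℕ → ℝ) (m l : ℕ)
    (hm : m < n) (hl : l < n) (hml : m ≠ l) :
    2 * a m * a l ≥ (∑ i ∈ Finset.range n, a i) ^ 2 / ((n : ℝ) - 1)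
      - ∑ i ∈ Finset.range n, (a i) ^ 2 := by
  have hm' : m ∈ Finset.range n := Finset.mem_range.2 hm
  have hl' : l ∈ Finset.range n := Finset.mem_range.2 hl
  set s := (Finset.range n).erase l with hs
  have hms : m ∈ s := Finset.mem_erase.2 ⟨hml, hm'⟩
  set b : ℕ → ℝ := fun i => if i = m then a m + a l else a i with hb
  have hbm : b m = a m + a l := by simp [hb]
  have hbe : ∀ i ∈ s.erase m, b i = a i := by
    intro i hi
    simp [hb, (Finset.mem_erase.1 hi).1]
  have hsum : ∑ i ∈ s, b i = ∑ i ∈ Finset.range n, a i := by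
    rw [← Finset.add_sum_erase s b hms, Finset.sum_congr rfl hbe, hbm,
      ← Finset.add_sum_erase _ a hl', ← hs, ← Finset.add_sum_erase _ a hms]
    ring
  have hsq : ∑ i ∈ s, b i ^ 2 = (∑ i ∈ Finset.range n, a i ^ 2) + 2 * a m * a l := by
    have : ∀ i ∈ s.erase m, b i ^ 2 = a i ^ 2 := fun i hi => by rw [hbe i hi]
    rw [← Finset.add_sum_erase s (fun i => b i ^ 2) hms, Finset.sum_congr rfl this, hbm,
      ← Finset.add_sum_erase _ (fun i => a i ^ 2) hl', ← hs,
      ← Finset.add_sum_erase _ (fun i => a i ^ 2) hms]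
    ring
  have hcard : (s.card : ℝ) = (n : ℝ) - 1 := by
    rw [hs, Finset.card_erase_of_mem hl', Finset.card_range]
    have : 1 ≤ n := le_trans (by norm_num) hn
    push_cast [Nat.cast_sub this]
    ring
  have hcs := sq_sum_le_card_mul_sum_sq (s := s) (f := b)
  rw [hsum, hsq, hcard] at hcs
  have hpos : (0 : ℝ) < (n : ℝ) - 1 := by
    have : (2 : ℝ) ≤ (n : ℝ) := by exact_mod_cast hn
    linarith
  rw [ge_iff_le, sub_le_iff_le_add, div_le_iff₀ hpos]
  nlinarith [hcs]
end

section
/- Let n ≥ 2 be an integer, a_1, …, a_n real numbers, and m ≠ l two indices. Then 2·a_m·a_l = (∑_{i=1}^n a_i)²/(n−1) − ∑_{i=1}^n a_i² holds if and only if a_i = a_m + a_l for every i ∉ {m, l}. -/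
theorem stmt_1 (n : ℕ) (hn : 2 ≤ n) (a : ℕ → ℝ) (m l : ℕ)
    (hm : m < n) (hl : l < n) (hml : m ≠ l) :
    2 * a m * a l = (∑ i ∈ Finset.range n, a i) ^ 2 / ((n : ℝ) - 1)
      - ∑ i ∈ Finset.range n, (a i) ^ 2
    ↔ ∀ i < n, i ≠ m → i ≠ l → a i = a m + a l := by
  have hm' : m ∈ Finset.range n := Finset.mem_range.mpr hm
  have hl' : l ∈ Finset.range n := Finset.mem_range.mpr hl
  set s := (Finset.range n).erase l with hs
  have hms : m ∈ s := Finset.mem_erase.mpr ⟨hml, hm'⟩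
  have hN : (0:ℝ) < (n:ℝ) - 1 := by
    have : (2:ℝ) ≤ n := by exact_mod_cast hn
    linarith
  have hcard : (s.card : ℝ) = (n : ℝ) - 1 := by
    rw [hs, Finset.card_erase_of_mem hl', Finset.card_range]
    have h1 : 1 ≤ n := by omega
    push_cast [Nat.cast_sub h1]
    ring
  set f : ℕ → ℝ := fun i => if i = m then a m + a l else a i with hf
  set S : ℝ := ∑ i ∈ Finset.range n, a i with hSdef
  set Q : ℝ := ∑ i ∈ Finset.range n, (a i)^2 with hQdef
  set c : ℝ := S / ((n:ℝ) - 1) with hcdef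
  have hcongr : ∑ i ∈ s.erase m, f i = ∑ i ∈ s.erase m, a i :=
    Finset.sum_congr rfl (fun i hi => by simp [hf, (Finset.mem_erase.mp hi).1])
  have hcongr2 : ∑ i ∈ s.erase m, (f i)^2 = ∑ i ∈ s.erase m, (a i)^2 :=
    Finset.sum_congr rfl (fun i hi => by simp [hf, (Finset.mem_erase.mp hi).1])
  have hsum : ∑ i ∈ s, f i = S := by
    rw [← Finset.sum_erase_add s f hms, hcongr, hSdef,
      ← Finset.sum_erase_add (Finset.range n) a hl',
      ← Finset.sum_erase_add ((Finset.range n).erase l) a hms]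
    simp [hf]
    ring
  have hsq : ∑ i ∈ s, (f i)^2 = Q + 2 * a m * a l := by
    rw [← Finset.sum_erase_add s (fun i => (f i)^2) hms, hcongr2, hQdef,
      ← Finset.sum_erase_add (Finset.range n) (fun i => (a i)^2) hl',
      ← Finset.sum_erase_add ((Finset.range n).erase l) (fun i => (a i)^2) hms]
    simp [hf]
    ring
  have key : ∑ i ∈ s, (f i - c)^2 = (∑ i ∈ s, (f i)^2) - S^2 / ((n:ℝ) - 1) := by
    have expand : ∀ i ∈ s, (f i - c)^2 = (f i)^2 - 2*c*(f i) + c^2 := fun i _ => by ring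
    rw [Finset.sum_congr rfl expand, Finset.sum_add_distrib, Finset.sum_sub_distrib,
      ← Finset.mul_sum, hsum, Finset.sum_const, nsmul_eq_mul, hcard, hcdef]
    field_simp
    ring
  constructor
  · intro h
    have hz : ∑ i ∈ s, (f i - c)^2 = 0 := by
      rw [key, hsq]; linarith
    have hall : ∀ i ∈ s, f i = c := by
      intro i hi
      have h1 := (Finset.sum_eq_zero_iff_of_nonneg (fun i _ => sq_nonneg (f i - c))).mp hz i hi
      have h2 : f i - c = 0 := by
        have := pow_eq_zero_iff (n := 2) (by norm_num) |>.mp h1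
        exact this
      linarith
    intro i hi him hil
    have his : i ∈ s := Finset.mem_erase.mpr ⟨hil, Finset.mem_range.mpr hi⟩
    have h1 := hall i his
    have h2 := hall m hms
    simp only [hf, if_pos rfl] at h2
    simp only [hf, if_neg him] at h1
    rw [h1, ← h2]
  · intro h
    have hall : ∀ i ∈ s, f i = a m + a l := by
      intro i hi
      by_cases him : i = m
      · simp [hf, him]
      · obtain ⟨hil, hir⟩ := Finset.mem_erase.mp hi
        have := h i (Finset.mem_range.mp hir) him hil
        simp [hf, him, this]
    have hS : S = ((n:ℝ) - 1) * (a m + a l) := by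
      rw [← hsum, Finset.sum_congr rfl hall, Finset.sum_const, nsmul_eq_mul, hcard]
    have hc : c = a m + a l := by
      rw [hcdef, hS]; field_simp
    have hz : ∑ i ∈ s, (f i - c)^2 = 0 :=
      Finset.sum_eq_zero fun i hi => by rw [hall i hi, hc]; ring
    rw [key, hsq] at hz
    linarith
end

section
/- Let n ≥ 4 be an integer and a_1, …, a_n real numbers. Then for any four pairwise distinct indices p, q, m, l ∈ {1, …, n} one has 2·a_p·a_q + 2·a_m·a_l ≥ (∑_{i=1}^n a_i)²/(n−2) − ∑_{i=1}^n a_i². -/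
theorem stmt_2 (n : ℕ) (hn : 4 ≤ n) (a : ℕ → ℝ) (p q m l : ℕ)
    (hp : p < n) (hq : q < n) (hm : m < n) (hl : l < n)
    (hpq : p ≠ q) (hpm : p ≠ m) (hpl : p ≠ l) (hqm : q ≠ m) (hql : q ≠ l) (hml : m ≠ l) :
    2 * a p * a q + 2 * a m * a l ≥
      (∑ i ∈ Finset.range n, a i) ^ 2 / ((n : ℝ) - 2)
        - ∑ i ∈ Finset.range n, (a i) ^ 2 := by
  classical
  set b : ℕ → ℝ := fun i => if i = p then a p + a q else if i = m then a m + a l else a i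
    with hb
  set t : Finset ℕ := ((Finset.range n).erase q).erase l with ht
  have hqmem : q ∈ Finset.range n := Finset.mem_range.2 hq
  have hlmem : l ∈ (Finset.range n).erase q :=
    Finset.mem_erase.2 ⟨hql.symm, Finset.mem_range.2 hl⟩
  have hpmem : p ∈ t := by
    simp [ht, Finset.mem_erase, hpl, hpq, Finset.mem_range.2 hp]
  have hmmem : m ∈ t.erase p := by
    simp [ht, Finset.mem_erase, hml, hqm.symm, hpm.symm, Finset.mem_range.2 hm]
  set u : Finset ℕ := (t.erase p).erase m with hu
  have hcard : (t.card : ℝ) = (n : ℝ) - 2 := by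
    have : t.card = n - 2 := by
      rw [ht, Finset.card_erase_of_mem hlmem, Finset.card_erase_of_mem hqmem,
        Finset.card_range]
      omega
    rw [this]
    have : (2 : ℕ) ≤ n := by omega
    push_cast [Nat.cast_sub this]
    ring
  -- sums over u: b = a there
  have hba : ∀ i ∈ u, b i = a i := by
    intro i hi
    simp only [hu, ht, Finset.mem_erase] at hi
    simp [hb, hi.1, hi.2.1]
  have hsum1 : ∑ i ∈ t, b i = ∑ i ∈ Finset.range n, a i := by
    rw [← Finset.add_sum_erase _ b hpmem, ← Finset.add_sum_erase _ b hmmem,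
      ← Finset.add_sum_erase _ a hqmem, ← Finset.add_sum_erase _ a hlmem,
      ← Finset.add_sum_erase _ a hpmem, ← Finset.add_sum_erase _ a hmmem,
      Finset.sum_congr rfl hba]
    simp [hb, hpm.symm]
    ring
  have hsum2 : ∑ i ∈ t, (b i) ^ 2
      = (∑ i ∈ Finset.range n, (a i) ^ 2) + 2 * a p * a q + 2 * a m * a l := by
    rw [← Finset.add_sum_erase _ (fun i => (b i) ^ 2) hpmem,
      ← Finset.add_sum_erase _ (fun i => (b i) ^ 2) hmmem,
      ← Finset.add_sum_erase _ (fun i => (a i) ^ 2) hqmem,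
      ← Finset.add_sum_erase _ (fun i => (a i) ^ 2) hlmem,
      ← Finset.add_sum_erase _ (fun i => (a i) ^ 2) hpmem,
      ← Finset.add_sum_erase _ (fun i => (a i) ^ 2) hmmem,
      Finset.sum_congr rfl (fun i hi => by rw [hba i hi])]
    simp only [hb, if_pos rfl]
    simp [hpm.symm]
    ring
  have hcs := sq_sum_le_card_mul_sum_sq (s := t) (f := b)
  have hn2 : (0 : ℝ) < (n : ℝ) - 2 := by
    have : (4 : ℝ) ≤ n := by exact_mod_cast hn
    linarith
  rw [ge_iff_le, sub_le_iff_le_add, div_le_iff₀ hn2]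
  calc (∑ i ∈ Finset.range n, a i) ^ 2 = (∑ i ∈ t, b i) ^ 2 := by rw [hsum1]
    _ ≤ (t.card : ℝ) * ∑ i ∈ t, (b i) ^ 2 := by exact_mod_cast hcs
    _ = (2 * a p * a q + 2 * a m * a l + ∑ i ∈ Finset.range n, (a i) ^ 2) * ((n:ℝ) - 2) := by
        rw [hcard, hsum2]; ring
end

section
/- Let n ≥ 3 and let h = (h_{ij}) be a real symmetric n×n matrix. Set S = ∑_{i,j=1}^n h_{ij}² and H = (1/n)·∑_{i=1}^n h_{ii}. Then for every integer k with 1 ≤ k ≤ n−1, ∑_{i=1}^k (h_{ii}·h_{nn} − h_{in}²) ≥ (k/2)·(n²H²/(n−1) − S). -/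
lemma key_3 (n : ℕ) (hn : 3 ≤ n) (h : ℕ → ℕ → ℝ)
    (hsymm : ∀ i j, h i j = h j i)
    (S H : ℝ)
    (hS : S = ∑ i ∈ Finset.range n, ∑ j ∈ Finset.range n, (h i j) ^ 2)
    (hH : H = (∑ i ∈ Finset.range n, h i i) / n)
    (i : ℕ) (hi : i < n - 1) :
    h i i * h (n - 1) (n - 1) - (h i (n - 1)) ^ 2
      ≥ (1 / 2) * ((n : ℝ) ^ 2 * H ^ 2 / ((n : ℝ) - 1) - S) := by
  set p := n - 1 with hp
  have hip : i ≠ p := Nat.ne_of_lt hi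
  have hpn : p < n := Nat.sub_lt (by omega) one_pos
  have hin : i < n := lt_trans hi hpn
  set s := Finset.range n with hs
  have hsub : ({i, p} : Finset ℕ) ⊆ s := by
    intro x hx
    simp only [Finset.mem_insert, Finset.mem_singleton] at hx
    rcases hx with rfl | rfl <;> simp [hs, hin, hpn]
  set A := s \ ({i, p} : Finset ℕ) with hA
  have hsplit : ∀ (G : ℕ → ℝ), ∑ j ∈ s, G j = G i + G p + ∑ j ∈ A, G j := by
    intro G
    rw [← Finset.sum_sdiff hsub, Finset.sum_pair hip]
    ring
  have hcardA : (A.card : ℝ) = (n : ℝ) - 2 := by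
    have : A.card = n - 2 := by
      rw [hA, Finset.card_sdiff_of_subset hsub, Finset.card_pair hip, hs, Finset.card_range]
    rw [this, Nat.cast_sub (by omega)]
    norm_num
  set T := ∑ j ∈ s, h j j with hT
  set R := ∑ j ∈ A, h j j with hR
  have hTsplit : T = h i i + h p p + R := hsplit (fun j => h j j)
  have hnH : (n : ℝ) * H = T := by
    rw [hH]
    field_simp
  set m : ℝ := (n : ℝ) - 2 with hm
  have hm1 : (1 : ℝ) ≤ m := by
    have : (3 : ℝ) ≤ (n : ℝ) := by exact_mod_cast hn
    simp [hm]; linarith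
  have hm0 : (0 : ℝ) < m := by linarith
  -- Cauchy-Schwarz on A
  have hCS : R ^ 2 ≤ m * ∑ j ∈ A, (h j j) ^ 2 := by
    have := sq_sum_le_card_mul_sum_sq (s := A) (f := fun j => h j j)
    rw [hcardA] at this
    exact this
  -- Key elementary inequality
  have hkey : (T - R) ^ 2 ≥ T ^ 2 / (m + 1) - R ^ 2 / m := by
    have hsq := sq_nonneg (m * T - (m + 1) * R)
    rw [ge_iff_le, div_sub_div _ _ (by linarith : m + 1 ≠ 0) (ne_of_gt hm0),
      div_le_iff₀ (by positivity)]
    nlinarith [hsq]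
  -- Bound S from below
  have hSge : S ≥ (h i i) ^ 2 + (h p p) ^ 2 + 2 * (h i p) ^ 2 + ∑ j ∈ A, (h j j) ^ 2 := by
    rw [hS]
    rw [hsplit (fun j => ∑ q ∈ s, h j q ^ 2)]
    have hGi : ∑ q ∈ s, h i q ^ 2 ≥ (h i i) ^ 2 + (h i p) ^ 2 := by
      have hsub2 : ({i, p} : Finset ℕ) ⊆ s := hsub
      calc (h i i) ^ 2 + (h i p) ^ 2 = ∑ q ∈ ({i, p} : Finset ℕ), h i q ^ 2 := by
            rw [Finset.sum_pair hip]
        _ ≤ ∑ q ∈ s, h i q ^ 2 :=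
            Finset.sum_le_sum_of_subset_of_nonneg hsub2 (fun _ _ _ => sq_nonneg _)
    have hGp : ∑ q ∈ s, h p q ^ 2 ≥ (h p p) ^ 2 + (h i p) ^ 2 := by
      calc (h p p) ^ 2 + (h i p) ^ 2 = ∑ q ∈ ({p, i} : Finset ℕ), h p q ^ 2 := by
            rw [Finset.sum_pair (Ne.symm hip), hsymm p i]
        _ ≤ ∑ q ∈ s, h p q ^ 2 :=
            Finset.sum_le_sum_of_subset_of_nonneg
              (by intro x hx; simp only [Finset.mem_insert, Finset.mem_singleton] at hx
                  rcases hx with rfl | rfl <;> simp [hs, hin, hpn])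
              (fun _ _ _ => sq_nonneg _)
    have hGA : ∑ j ∈ A, ∑ q ∈ s, h j q ^ 2 ≥ ∑ j ∈ A, (h j j) ^ 2 := by
      apply Finset.sum_le_sum
      intro j hj
      have hjs : j ∈ s := (Finset.mem_sdiff.mp hj).1
      calc (h j j) ^ 2 = ∑ q ∈ ({j} : Finset ℕ), h j q ^ 2 := by simp
        _ ≤ ∑ q ∈ s, h j q ^ 2 :=
            Finset.sum_le_sum_of_subset_of_nonneg (by simpa using hjs)
              (fun _ _ _ => sq_nonneg _)
    linarith
  -- put it together
  have hfrac : (n : ℝ) ^ 2 * H ^ 2 / ((n : ℝ) - 1) = T ^ 2 / (m + 1) := by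
    have : (n : ℝ) ^ 2 * H ^ 2 = ((n : ℝ) * H) ^ 2 := by ring
    rw [this, hnH, hm]
    ring_nf
  rw [hfrac]
  have h2 : 2 * (h i i * h p p) = (T - R) ^ 2 - (h i i) ^ 2 - (h p p) ^ 2 := by
    rw [hTsplit]; ring
  have hRm : R ^ 2 / m ≤ ∑ j ∈ A, (h j j) ^ 2 := by
    rw [div_le_iff₀ hm0]
    nlinarith [hCS]
  nlinarith [hkey, hSge, hRm, h2]

theorem stmt_3 (n : ℕ) (hn : 3 ≤ n) (h : ℕ → ℕ → ℝ)
    (hsymm : ∀ i j, h i j = h j i)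
    (S H : ℝ)
    (hS : S = ∑ i ∈ Finset.range n, ∑ j ∈ Finset.range n, (h i j) ^ 2)
    (hH : H = (∑ i ∈ Finset.range n, h i i) / n)
    (k : ℕ) (hk1 : 1 ≤ k) (hk2 : k ≤ n - 1) :
    ∑ i ∈ Finset.range k, (h i i * h (n - 1) (n - 1) - (h i (n - 1)) ^ 2)
      ≥ ((k : ℝ) / 2) * ((n : ℝ) ^ 2 * H ^ 2 / ((n : ℝ) - 1) - S) := by
  have hbound : ∀ i ∈ Finset.range k,
      h i i * h (n - 1) (n - 1) - (h i (n - 1)) ^ 2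
        ≥ (1 / 2) * ((n : ℝ) ^ 2 * H ^ 2 / ((n : ℝ) - 1) - S) := by
    intro i hi
    exact key_3 n hn h hsymm S H hS hH i (lt_of_lt_of_le (Finset.mem_range.mp hi) hk2)
  calc ∑ i ∈ Finset.range k, (h i i * h (n - 1) (n - 1) - (h i (n - 1)) ^ 2)
      ≥ ∑ i ∈ Finset.range k, (1 / 2) * ((n : ℝ) ^ 2 * H ^ 2 / ((n : ℝ) - 1) - S) :=
        Finset.sum_le_sum hbound
    _ = ((k : ℝ) / 2) * ((n : ℝ) ^ 2 * H ^ 2 / ((n : ℝ) - 1) - S) := by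
        rw [Finset.sum_const, Finset.card_range]
        ring
end

section
/- Let n ≥ 4 and let h = (h_{ij}) be a real symmetric n×n matrix with trace T = ∑_i h_{ii} and squared norm S = ∑_{i,j} h_{ij}². Then h_{11}h_{33} + h_{22}h_{44} + h_{22}h_{33} + h_{11}h_{44} − h_{13}² − h_{23}² − h_{24}² − h_{14}² − 2(h_{13}h_{24} − h_{14}h_{23}) ≥ T²/(n−2) − S. -/
lemma key_cs (c X R Q : ℝ) (hc : 0 ≤ c) (hQ : 0 ≤ Q) (hRQ : R^2 ≤ c*Q) :
    (X+R)^2 ≤ (c+2)*(X^2/2+Q) := by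
  rcases hc.eq_or_lt with rfl | hc
  · have hR : R = 0 := by nlinarith [sq_nonneg R]
    subst hR; nlinarith
  · nlinarith [sq_nonneg (c*X - 2*R),
      mul_nonneg (by linarith : (0:ℝ) ≤ c + 2) (by linarith : (0:ℝ) ≤ c*Q - R^2),
      mul_pos hc hc]

theorem stmt_7 (n : ℕ) (hn : 4 ≤ n) (h : ℕ → ℕ → ℝ)
    (hsymm : ∀ i j, h i j = h j i)
    (T S : ℝ)
    (hT : T = ∑ i ∈ Finset.range n, h i i)
    (hS : S = ∑ i ∈ Finset.range n, ∑ j ∈ Finset.range n, (h i j) ^ 2) :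
    h 0 0 * h 2 2 + h 1 1 * h 3 3 + h 1 1 * h 2 2 + h 0 0 * h 3 3
      - (h 0 2) ^ 2 - (h 1 2) ^ 2 - (h 1 3) ^ 2 - (h 0 3) ^ 2
      - 2 * (h 0 2 * h 1 3 - h 0 3 * h 1 2)
      ≥ T ^ 2 / ((n : ℝ) - 2) - S := by
  have hn4 : (4:ℝ) ≤ (n:ℝ) := by exact_mod_cast hn
  have hn2 : (0:ℝ) < (n:ℝ) - 2 := by linarith
  set R := ∑ i ∈ Finset.Ico 4 n, h i i with hRdef
  set Q := ∑ i ∈ Finset.Ico 4 n, (h i i)^2 with hQdef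
  have hsplit : ∀ f : ℕ → ℝ, ∑ i ∈ Finset.range n, f i
      = f 0 + f 1 + f 2 + f 3 + ∑ i ∈ Finset.Ico 4 n, f i := by
    intro f
    rw [Finset.range_eq_Ico, ← Finset.sum_Ico_consecutive f (by omega : 0 ≤ 4) hn,
      ← Finset.range_eq_Ico]
    simp [Finset.sum_range_succ]
  have hTsum : T = h 0 0 + h 1 1 + h 2 2 + h 3 3 + R := by rw [hT, hsplit]
  -- Cauchy-Schwarz on the tail
  have hQ0 : 0 ≤ Q := Finset.sum_nonneg fun i _ => sq_nonneg _
  have hcs : R^2 ≤ ((n:ℝ) - 4) * Q := by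
    have := sq_sum_le_card_mul_sum_sq (s := Finset.Ico 4 n) (f := fun i => h i i)
    have hcard : ((Finset.Ico 4 n).card : ℝ) = (n:ℝ) - 4 := by
      rw [Nat.card_Ico]
      have : ((n - 4 : ℕ) : ℝ) = (n:ℝ) - 4 := by
        have := Nat.cast_sub hn (R := ℝ)
        simpa using this
      simpa using this
    rw [hcard] at this
    exact this
  -- lower bound on S
  have hrow : ∀ i ∈ Finset.range n,
      (fun i => h i i ^ 2 + (if i = 0 then h 0 2^2 + h 0 3^2 else
        if i = 1 then h 1 2^2 + h 1 3^2 else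
        if i = 2 then h 0 2^2 + h 1 2^2 else
        if i = 3 then h 0 3^2 + h 1 3^2 else 0)) i
      ≤ ∑ j ∈ Finset.range n, h i j ^ 2 := by
    intro i hi
    have hnn : ∀ j ∈ Finset.range n, (0:ℝ) ≤ h i j ^ 2 := fun j _ => sq_nonneg _
    rcases Nat.lt_or_ge i 4 with hi4 | hi4
    · interval_cases i
      · have hsub : ({0,2,3} : Finset ℕ) ⊆ Finset.range n := by
          intro x hx; simp at hx; simp; omega
        simp only [if_pos rfl]
        calc h 0 0 ^ 2 + (h 0 2 ^ 2 + h 0 3 ^ 2)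
            = ∑ j ∈ ({0,2,3} : Finset ℕ), h 0 j ^ 2 := by
              rw [Finset.sum_insert (by decide), Finset.sum_insert (by decide),
                Finset.sum_singleton]; try ring
          _ ≤ _ := Finset.sum_le_sum_of_subset_of_nonneg hsub (fun j hj _ => sq_nonneg _)
      · have hsub : ({1,2,3} : Finset ℕ) ⊆ Finset.range n := by
          intro x hx; simp at hx; simp; omega
        simp only [if_neg (by decide : (1:ℕ) ≠ 0), if_pos rfl]
        calc h 1 1 ^ 2 + (h 1 2 ^ 2 + h 1 3 ^ 2)
            = ∑ j ∈ ({1,2,3} : Finset ℕ), h 1 j ^ 2 := by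
              rw [Finset.sum_insert (by decide), Finset.sum_insert (by decide),
                Finset.sum_singleton]; try ring
          _ ≤ _ := Finset.sum_le_sum_of_subset_of_nonneg hsub (fun j hj _ => sq_nonneg _)
      · have hsub : ({2,0,1} : Finset ℕ) ⊆ Finset.range n := by
          intro x hx; simp at hx; simp; omega
        simp only [if_neg (by decide : (2:ℕ) ≠ 0), if_neg (by decide : (2:ℕ) ≠ 1), if_pos rfl]
        calc h 2 2 ^ 2 + (h 0 2 ^ 2 + h 1 2 ^ 2)
            = ∑ j ∈ ({2,0,1} : Finset ℕ), h 2 j ^ 2 := by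
              rw [Finset.sum_insert (by decide), Finset.sum_insert (by decide),
                Finset.sum_singleton, hsymm 2 0, hsymm 2 1]; try ring
          _ ≤ _ := Finset.sum_le_sum_of_subset_of_nonneg hsub (fun j hj _ => sq_nonneg _)
      · have hsub : ({3,0,1} : Finset ℕ) ⊆ Finset.range n := by
          intro x hx; simp at hx; simp; omega
        simp only [if_neg (by decide : (3:ℕ) ≠ 0), if_neg (by decide : (3:ℕ) ≠ 1),
          if_neg (by decide : (3:ℕ) ≠ 2), if_pos rfl]
        calc h 3 3 ^ 2 + (h 0 3 ^ 2 + h 1 3 ^ 2)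
            = ∑ j ∈ ({3,0,1} : Finset ℕ), h 3 j ^ 2 := by
              rw [Finset.sum_insert (by decide), Finset.sum_insert (by decide),
                Finset.sum_singleton, hsymm 3 0, hsymm 3 1]; try ring
          _ ≤ _ := Finset.sum_le_sum_of_subset_of_nonneg hsub (fun j hj _ => sq_nonneg _)
    · have h0 : i ≠ 0 := by omega
      have h1 : i ≠ 1 := by omega
      have h2 : i ≠ 2 := by omega
      have h3 : i ≠ 3 := by omega
      simp only [if_neg h0, if_neg h1, if_neg h2, if_neg h3, add_zero]
      have hsub : ({i} : Finset ℕ) ⊆ Finset.range n := by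
        intro x hx; simp at hx; subst hx; exact hi
      calc h i i ^ 2 = ∑ j ∈ ({i} : Finset ℕ), h i j ^ 2 := by rw [Finset.sum_singleton]
        _ ≤ _ := Finset.sum_le_sum_of_subset_of_nonneg hsub (fun j hj _ => sq_nonneg _)
  have hSge : h 0 0^2 + h 1 1^2 + h 2 2^2 + h 3 3^2 + Q
      + 2*(h 0 2^2 + h 0 3^2 + h 1 2^2 + h 1 3^2) ≤ S := by
    have := Finset.sum_le_sum hrow
    rw [← hS] at this
    rw [hsplit (fun i => h i i ^ 2 + _)] at this
    have htail : ∑ i ∈ Finset.Ico 4 n,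
        (h i i ^ 2 + (if i = 0 then h 0 2^2 + h 0 3^2 else
        if i = 1 then h 1 2^2 + h 1 3^2 else
        if i = 2 then h 0 2^2 + h 1 2^2 else
        if i = 3 then h 0 3^2 + h 1 3^2 else 0)) = Q := by
      rw [hQdef]
      apply Finset.sum_congr rfl
      intro i hi
      simp only [Finset.mem_Ico] at hi
      rw [if_neg (by omega), if_neg (by omega), if_neg (by omega), if_neg (by omega), add_zero]
    rw [htail] at this
    norm_num at this
    linarith
  -- final algebra
  rw [ge_iff_le, sub_le_iff_le_add, div_le_iff₀ hn2]
  have hkey := key_cs ((n:ℝ) - 4) (h 0 0 + h 1 1 + h 2 2 + h 3 3) R Q (by linarith) hQ0 hcs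
  have hG : h 0 0 * h 2 2 + h 1 1 * h 3 3 + h 1 1 * h 2 2 + h 0 0 * h 3 3
      - (h 0 2) ^ 2 - (h 1 2) ^ 2 - (h 1 3) ^ 2 - (h 0 3) ^ 2
      - 2 * (h 0 2 * h 1 3 - h 0 3 * h 1 2) + S ≥ (h 0 0 + h 1 1 + h 2 2 + h 3 3)^2/2 + Q := by
    nlinarith [sq_nonneg (h 0 0 - h 1 1), sq_nonneg (h 2 2 - h 3 3),
      sq_nonneg (h 0 2 - h 1 3), sq_nonneg (h 0 3 + h 1 2)]
  rw [hTsum]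
  calc (h 0 0 + h 1 1 + h 2 2 + h 3 3 + R)^2 ≤ ((n:ℝ) - 4 + 2) * ((h 0 0 + h 1 1 + h 2 2 + h 3 3)^2/2 + Q) := hkey
    _ ≤ ((n:ℝ) - 4 + 2) * (h 0 0 * h 2 2 + h 1 1 * h 3 3 + h 1 1 * h 2 2 + h 0 0 * h 3 3
      - (h 0 2) ^ 2 - (h 1 2) ^ 2 - (h 1 3) ^ 2 - (h 0 3) ^ 2
      - 2 * (h 0 2 * h 1 3 - h 0 3 * h 1 2) + S) := by
        apply mul_le_mul_of_nonneg_left hG (by linarith)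
    _ = (h 0 0 * h 2 2 + h 1 1 * h 3 3 + h 1 1 * h 2 2 + h 0 0 * h 3 3
      - (h 0 2) ^ 2 - (h 1 2) ^ 2 - (h 1 3) ^ 2 - (h 0 3) ^ 2
      - 2 * (h 0 2 * h 1 3 - h 0 3 * h 1 2) + S) * ((n:ℝ) - 2) := by ring
end

section
/- Let n ≥ 4 and let h = (h_{ij}) be a real symmetric n×n matrix with trace T = ∑_i h_{ii} and squared norm S = ∑_{i,j} h_{ij}². Then h_{11}h_{33} + h_{22}h_{33} − (3/2)h_{13}² − (3/2)h_{23}² − (1/2)h_{24}² − (1/2)h_{14}² ≥ T²/(n−1) − S. -/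
open Finset

lemma aux_cs (n : ℕ) (hn : 4 ≤ n) (a : ℕ → ℝ) (m l : ℕ) (hm : m < n) (hl : l < n)
    (hml : m ≠ l) :
    (∑ i ∈ Finset.range n, a i) ^ 2 / ((n : ℝ) - 1)
      ≤ (∑ i ∈ Finset.range n, (a i) ^ 2) + 2 * a m * a l := by
  set s := (Finset.range n).erase m with hs
  have hls : l ∈ s := Finset.mem_erase.2 ⟨hml.symm, Finset.mem_range.2 hl⟩
  set g : ℕ → ℝ := fun i => if i = l then a l + a m else a i with hg
  have hsum : ∑ i ∈ s, g i = ∑ i ∈ Finset.range n, a i := by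
    rw [← Finset.add_sum_erase s g hls, ← Finset.add_sum_erase _ a (Finset.mem_range.2 hm),
      ← Finset.add_sum_erase _ a (Finset.mem_erase.2 ⟨hml.symm, Finset.mem_range.2 hl⟩)]
    have : ∑ i ∈ (s.erase l), g i = ∑ i ∈ (s.erase l), a i := by
      refine Finset.sum_congr rfl fun i hi => ?_
      simp [hg, Finset.ne_of_mem_erase hi]
    rw [this]
    simp [hg]
    ring
  have hsumsq : ∑ i ∈ s, (g i) ^ 2
      = (∑ i ∈ Finset.range n, (a i) ^ 2) + 2 * a m * a l := by
    rw [← Finset.add_sum_erase s (fun i => (g i)^2) hls,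
      ← Finset.add_sum_erase _ (fun i => (a i)^2) (Finset.mem_range.2 hm),
      ← Finset.add_sum_erase _ (fun i => (a i)^2) (Finset.mem_erase.2 ⟨hml.symm, Finset.mem_range.2 hl⟩)]
    have : ∑ i ∈ (s.erase l), (g i)^2 = ∑ i ∈ (s.erase l), (a i)^2 := by
      refine Finset.sum_congr rfl fun i hi => ?_
      simp [hg, Finset.ne_of_mem_erase hi]
    rw [this]
    simp [hg]
    ring
  have hcard : (s.card : ℝ) = (n : ℝ) - 1 := by
    rw [hs, Finset.card_erase_of_mem (Finset.mem_range.2 hm), Finset.card_range]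
    have : 1 ≤ n := by omega
    push_cast [Nat.cast_sub this]
    ring
  have hcs := sq_sum_le_card_mul_sum_sq (s := s) (f := g)
  rw [hsum, hsumsq, hcard] at hcs
  have hpos : (0 : ℝ) < (n : ℝ) - 1 := by
    have : (4 : ℝ) ≤ (n : ℝ) := by exact_mod_cast hn
    linarith
  rw [div_le_iff₀ hpos]
  linarith [hcs]

theorem stmt_8 (n : ℕ) (hn : 4 ≤ n) (h : ℕ → ℕ → ℝ)
    (hsymm : ∀ i j, h i j = h j i)
    (T S : ℝ)
    (hT : T = ∑ i ∈ Finset.range n, h i i)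
    (hS : S = ∑ i ∈ Finset.range n, ∑ j ∈ Finset.range n, (h i j) ^ 2) :
    h 0 0 * h 2 2 + h 1 1 * h 2 2
      - (3 / 2) * (h 0 2) ^ 2 - (3 / 2) * (h 1 2) ^ 2
      - (1 / 2) * (h 1 3) ^ 2 - (1 / 2) * (h 0 3) ^ 2
      ≥ T ^ 2 / ((n : ℝ) - 1) - S := by
  set a : ℕ → ℝ := fun i => h i i with ha
  set D : ℝ := ∑ i ∈ Finset.range n, (a i) ^ 2 with hD
  have h02 : T ^ 2 / ((n:ℝ) - 1) ≤ D + 2 * a 0 * a 2 := by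
    rw [hT]; exact aux_cs n hn a 0 2 (by omega) (by omega) (by omega)
  have h12 : T ^ 2 / ((n:ℝ) - 1) ≤ D + 2 * a 1 * a 2 := by
    rw [hT]; exact aux_cs n hn a 1 2 (by omega) (by omega) (by omega)
  -- S ≥ D + 2*(h02² + h12² + h03² + h13²)
  have hSge : S ≥ D + 2 * ((h 0 2)^2 + (h 1 2)^2 + (h 0 3)^2 + (h 1 3)^2) := by
    have hsplit : S = D + ∑ i ∈ Finset.range n, ∑ j ∈ (Finset.range n).erase i, (h i j)^2 := by
      rw [hS, hD, ← Finset.sum_add_distrib]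
      refine Finset.sum_congr rfl fun i hi => ?_
      rw [ha, ← Finset.add_sum_erase _ (fun j => (h i j)^2) hi]
    set R : ℕ → ℝ := fun i => ∑ j ∈ (Finset.range n).erase i, (h i j)^2 with hR
    have hRnonneg : ∀ i, 0 ≤ R i := fun i => Finset.sum_nonneg fun j _ => sq_nonneg _
    have hsub : ({0,1} : Finset ℕ) ⊆ Finset.range n := by
      intro x hx; fin_cases hx <;> simp <;> omega
    have hbig : R 0 + R 1 ≤ ∑ i ∈ Finset.range n, R i := by
      have := Finset.sum_le_sum_of_subset_of_nonneg hsub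
        (fun i _ _ => hRnonneg i)
      simpa using this
    have hR0 : (h 0 2)^2 + (h 0 3)^2 ≤ R 0 := by
      have hsub2 : ({2,3} : Finset ℕ) ⊆ (Finset.range n).erase 0 := by
        intro x hx; fin_cases hx <;> simp <;> omega
      have := Finset.sum_le_sum_of_subset_of_nonneg hsub2
        (fun j _ _ => sq_nonneg (h 0 j))
      simpa [hR] using this
    have hR1 : (h 1 2)^2 + (h 1 3)^2 ≤ R 1 := by
      have hsub2 : ({2,3} : Finset ℕ) ⊆ (Finset.range n).erase 1 := by
        intro x hx; fin_cases hx <;> simp <;> omega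
      have := Finset.sum_le_sum_of_subset_of_nonneg hsub2
        (fun j _ _ => sq_nonneg (h 1 j))
      simpa [hR] using this
    have hbig2 : R 2 + R 3 ≤ (∑ i ∈ Finset.range n, R i) - (R 0 + R 1) := by
      have hsub4 : ({0,1,2,3} : Finset ℕ) ⊆ Finset.range n := by
        intro x hx; fin_cases hx <;> simp <;> omega
      have := Finset.sum_le_sum_of_subset_of_nonneg hsub4
        (fun i _ _ => hRnonneg i)
      have h4 : ∑ i ∈ ({0,1,2,3} : Finset ℕ), R i = R 0 + R 1 + R 2 + R 3 := by
        simp [Finset.sum_insert, Finset.mem_insert]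
        ring
      rw [h4] at this
      linarith
    have hR2 : (h 2 0)^2 + (h 2 1)^2 ≤ R 2 := by
      have hsub2 : ({0,1} : Finset ℕ) ⊆ (Finset.range n).erase 2 := by
        intro x hx; fin_cases hx <;> simp <;> omega
      have := Finset.sum_le_sum_of_subset_of_nonneg hsub2
        (fun j _ _ => sq_nonneg (h 2 j))
      simpa [hR] using this
    have hR3 : (h 3 0)^2 + (h 3 1)^2 ≤ R 3 := by
      have hsub2 : ({0,1} : Finset ℕ) ⊆ (Finset.range n).erase 3 := by
        intro x hx; fin_cases hx <;> simp <;> omega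
      have := Finset.sum_le_sum_of_subset_of_nonneg hsub2
        (fun j _ _ => sq_nonneg (h 3 j))
      simpa [hR] using this
    have e20 : h 2 0 = h 0 2 := hsymm 2 0
    have e21 : h 2 1 = h 1 2 := hsymm 2 1
    have e30 : h 3 0 = h 0 3 := hsymm 3 0
    have e31 : h 3 1 = h 1 3 := hsymm 3 1
    rw [e20, e21] at hR2
    rw [e30, e31] at hR3
    linarith [hsplit, hbig, hbig2, hR0, hR1, hR2, hR3]
  have ea0 : a 0 = h 0 0 := rfl
  have ea1 : a 1 = h 1 1 := rfl
  have ea2 : a 2 = h 2 2 := rfl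
  nlinarith [h02, h12, hSge, sq_nonneg (h 0 2), sq_nonneg (h 1 2), sq_nonneg (h 0 3), sq_nonneg (h 1 3)]
end

section
/- Let n ≥ 3 and let h = (h_{ij}) be a real symmetric n×n matrix with trace T = ∑_i h_{ii} and squared norm S = ∑_{i,j} h_{ij}². Then ∑_{k=2}^n [2h_{1k}² − h_{11}h_{kk}] ≤ ((n−1)/2)·(S − T²/(n−1)). -/
theorem stmt_9 (n : ℕ) (hn : 3 ≤ n) (h : ℕ → ℕ → ℝ)
    (hsymm : ∀ i j, h i j = h j i)
    (T S : ℝ)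
    (hT : T = ∑ i ∈ Finset.range n, h i i)
    (hS : S = ∑ i ∈ Finset.range n, ∑ j ∈ Finset.range n, (h i j) ^ 2) :
    ∑ k ∈ Finset.Ico 1 n, (2 * (h 0 k) ^ 2 - h 0 0 * h k k)
      ≤ (((n : ℝ) - 1) / 2) * (S - T ^ 2 / ((n : ℝ) - 1)) := by
  have hn0 : 0 < n := by omega
  set I := Finset.Ico 1 n with hI
  set a := h 0 0 with ha
  set t := ∑ k ∈ I, h k k with ht
  set P := ∑ k ∈ I, (h 0 k) ^ 2 with hP
  set Q := ∑ i ∈ I, ∑ j ∈ I, (h i j) ^ 2 with hQ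
  set D := ∑ k ∈ I, (h k k) ^ 2 with hD
  have hsplit : ∀ f : ℕ → ℝ, ∑ i ∈ Finset.range n, f i = f 0 + ∑ i ∈ I, f i := by
    intro f
    rw [Finset.range_eq_Ico, Finset.sum_eq_sum_Ico_succ_bot hn0]
  have hTeq : T = a + t := by rw [hT, hsplit]
  have hSeq : S = a ^ 2 + 2 * P + Q := by
    rw [hS, hsplit]
    rw [hsplit (fun j => (h 0 j) ^ 2)]
    have : ∀ i ∈ I, ∑ j ∈ Finset.range n, (h i j) ^ 2
        = (h 0 i) ^ 2 + ∑ j ∈ I, (h i j) ^ 2 := by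
      intro i _
      rw [hsplit (fun j => (h i j) ^ 2), hsymm i 0]
    rw [Finset.sum_congr rfl this, Finset.sum_add_distrib]
    ring
  have hQD : D ≤ Q := by
    apply Finset.sum_le_sum
    intro i hi
    exact Finset.single_le_sum (f := fun j => h i j ^ 2) (fun j _ => sq_nonneg _) hi
  have hcard : (I.card : ℝ) = (n : ℝ) - 1 := by
    rw [Nat.card_Ico]
    have : 1 ≤ n := by omega
    push_cast [Nat.cast_sub this]
    ring
  have htD : t ^ 2 ≤ ((n : ℝ) - 1) * D := by
    have := sq_sum_le_card_mul_sum_sq (s := I) (f := fun k => h k k)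
    calc t ^ 2 ≤ (I.card : ℝ) * D := by exact_mod_cast this
      _ = ((n : ℝ) - 1) * D := by rw [hcard]
  have hPnn : 0 ≤ P := Finset.sum_nonneg fun _ _ => sq_nonneg _
  have hDnn : 0 ≤ D := Finset.sum_nonneg fun _ _ => sq_nonneg _
  have hLHS : ∑ k ∈ I, (2 * (h 0 k) ^ 2 - h 0 0 * h k k) = 2 * P - a * t := by
    rw [Finset.sum_sub_distrib, ← Finset.mul_sum, ← Finset.mul_sum]
  have hnR : (3 : ℝ) ≤ (n : ℝ) := by exact_mod_cast hn
  have hne : (n : ℝ) - 1 ≠ 0 := by nlinarith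
  rw [hLHS, hSeq, hTeq]
  have heq : (((n:ℝ)-1)/2) * (a^2+2*P+Q - (a+t)^2/((n:ℝ)-1))
      = (((n:ℝ)-1)*(a^2+2*P+Q) - (a+t)^2)/2 := by
    field_simp
  rw [heq]
  have key : t ^ 2 ≤ ((n : ℝ) - 1) * Q := by nlinarith
  nlinarith [sq_nonneg a, sq_nonneg (a - t), mul_nonneg hPnn (by linarith : (0:ℝ) ≤ (n:ℝ) - 3)]
end

section
/- Let n ≥ 4 and let h = (h_{ij}) be a real symmetric n×n matrix with trace T = ∑_i h_{ii} and squared norm S = ∑_{i,j} h_{ij}². Then for all real numbers λ, μ ∈ [−1, 1]: h_{11}h_{33} − h_{13}² + μ²λ²(h_{22}h_{44} − h_{24}²) + μ²(h_{22}h_{33} − h_{23}²) + λ²(h_{11}h_{44} − h_{14}²) + 2μλ·h_{14}h_{23} − 2μλ·h_{13}h_{24} ≥ (1 + λ² + μ² + λ²μ²)·(T²/(2(n−1)) − S/2). -/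
open Finset in
lemma pair_ineq (n : ℕ) (hn : 1 ≤ n) (a : ℕ → ℝ) (k l : ℕ) (hk : k < n) (hl : l < n)
    (hkl : k ≠ l) :
    (∑ i ∈ Finset.range n, a i)^2
      ≤ ((n:ℝ) - 1) * ((∑ i ∈ Finset.range n, (a i)^2) + 2 * a k * a l) := by
  classical
  set s := Finset.range n \ {l} with hs
  set f : ℕ → ℝ := fun i => if i = k then a k + a l else a i with hf
  have hks : k ∈ s := by simp [hs, Finset.mem_sdiff, hk, hkl]
  have hsub : {l} ⊆ Finset.range n := by simp [Finset.singleton_subset_iff, hl]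
  have hsa : ∑ i ∈ s, a i = (∑ i ∈ Finset.range n, a i) - a l := by
    rw [hs, Finset.sum_sdiff_eq_sub hsub]; simp
  have hsa2 : ∑ i ∈ s, (a i)^2 = (∑ i ∈ Finset.range n, (a i)^2) - (a l)^2 := by
    rw [hs, Finset.sum_sdiff_eq_sub hsub]; simp
  have hsumf : ∑ i ∈ s, f i = ∑ i ∈ Finset.range n, a i := by
    have : ∀ i, f i = a i + (if i = k then a l else 0) := by
      intro i
      by_cases hik : i = k
      · simp [hf, hik]
      · simp [hf, hik]
    simp only [this, Finset.sum_add_distrib, Finset.sum_ite_eq' s k (fun _ => a l), hks, hsa,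
      if_true, eq_self_iff_true]
    ring
  have hsumf2 : ∑ i ∈ s, (f i)^2
      = (∑ i ∈ Finset.range n, (a i)^2) + 2 * a k * a l := by
    have : ∀ i, (f i)^2 = (a i)^2 + (if i = k then 2 * a k * a l + (a l)^2 else 0) := by
      intro i
      by_cases hik : i = k
      · simp [hf, hik]; ring
      · simp [hf, hik]
    simp only [this, Finset.sum_add_distrib,
      Finset.sum_ite_eq' s k (fun _ => 2 * a k * a l + (a l)^2), hks, hsa2, if_true]
    ring
  have hcard : (s.card : ℝ) = (n:ℝ) - 1 := by
    have : s.card = n - 1 := by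
      rw [hs, Finset.card_sdiff_of_subset hsub]; simp
    rw [this]; push_cast [Nat.cast_sub hn]; ring
  have := sq_sum_le_card_mul_sum_sq (s := s) (f := f)
  rw [hsumf, hsumf2, hcard] at this
  exact this

set_option maxHeartbeats 1000000 in
theorem stmt_15 (n : ℕ) (hn : 4 ≤ n) (h : ℕ → ℕ → ℝ)
    (hsymm : ∀ i j, h i j = h j i)
    (T S : ℝ)
    (hT : T = ∑ i ∈ Finset.range n, h i i)
    (hS : S = ∑ i ∈ Finset.range n, ∑ j ∈ Finset.range n, (h i j) ^ 2)
    (l m : ℝ) (hl : l ∈ Set.Icc (-1 : ℝ) 1) (hm : m ∈ Set.Icc (-1 : ℝ) 1) :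
    h 0 0 * h 2 2 - (h 0 2) ^ 2
      + m ^ 2 * l ^ 2 * (h 1 1 * h 3 3 - (h 1 3) ^ 2)
      + m ^ 2 * (h 1 1 * h 2 2 - (h 1 2) ^ 2)
      + l ^ 2 * (h 0 0 * h 3 3 - (h 0 3) ^ 2)
      + 2 * m * l * (h 0 3 * h 1 2) - 2 * m * l * (h 0 2 * h 1 3)
      ≥ (1 + l ^ 2 + m ^ 2 + l ^ 2 * m ^ 2) * (T ^ 2 / (2 * ((n : ℝ) - 1)) - S / 2) := by
  have hn1 : (0:ℝ) < (n:ℝ) - 1 := by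
    have : (4:ℝ) ≤ (n:ℝ) := by exact_mod_cast hn
    linarith
  have hn' : 1 ≤ n := by omega
  set Q : ℝ := ∑ i ∈ Finset.range n, (h i i)^2 with hQ
  -- pair inequalities
  have pair : ∀ k lv : ℕ, k < n → lv < n → k ≠ lv →
      T ^ 2 / (2 * ((n : ℝ) - 1)) ≤ Q / 2 + h k k * h lv lv := by
    intro k lv hk hlv hklv
    have := pair_ineq n hn' (fun i => h i i) k lv hk hlv hklv
    rw [← hT] at this
    rw [div_le_iff₀ (by linarith)]
    nlinarith [this]
  have k02 := pair 0 2 (by omega) (by omega) (by omega)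
  have k13 := pair 1 3 (by omega) (by omega) (by omega)
  have k12 := pair 1 2 (by omega) (by omega) (by omega)
  have k03 := pair 0 3 (by omega) (by omega) (by omega)
  -- lower bound for S
  have hS6 : Q + 2 * ((h 0 1)^2 + (h 0 2)^2 + (h 0 3)^2 + (h 1 2)^2 + (h 1 3)^2 + (h 2 3)^2)
      ≤ S := by
    classical
    set g : ℕ → ℝ := fun i => ∑ j ∈ Finset.range n, (h i j)^2 with hg
    have hsub4 : Finset.range 4 ⊆ Finset.range n := Finset.range_subset_range.2 hn
    have hsplit : ∀ f : ℕ → ℝ, ∑ i ∈ Finset.range n, f i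
        = ∑ i ∈ Finset.range 4, f i + ∑ i ∈ Finset.Ico 4 n, f i := by
      intro f
      rw [Finset.range_eq_Ico, ← Finset.sum_Ico_consecutive f (Nat.zero_le 4) hn, Finset.range_eq_Ico]
    have hgi : ∀ i, i < 4 → ∑ j ∈ Finset.range 4, (h i j)^2 ≤ g i := by
      intro i _
      exact Finset.sum_le_sum_of_subset_of_nonneg hsub4 (fun j _ _ => sq_nonneg _)
    have htail : ∑ i ∈ Finset.Ico 4 n, (h i i)^2 ≤ ∑ i ∈ Finset.Ico 4 n, g i := by
      refine Finset.sum_le_sum fun i hi => ?_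
      have hin : i ∈ Finset.range n := by
        rw [Finset.mem_range]; exact (Finset.mem_Ico.1 hi).2
      exact Finset.single_le_sum (fun j _ => sq_nonneg (h i j)) hin
    have hSs : S = ∑ i ∈ Finset.range 4, g i + ∑ i ∈ Finset.Ico 4 n, g i := by
      rw [hS, hsplit]
    have hQs : Q = ∑ i ∈ Finset.range 4, (h i i)^2 + ∑ i ∈ Finset.Ico 4 n, (h i i)^2 := by
      rw [hQ, hsplit]
    have hg0 := hgi 0 (by omega)
    have hg1 := hgi 1 (by omega)
    have hg2 := hgi 2 (by omega)
    have hg3 := hgi 3 (by omega)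
    simp only [Finset.sum_range_succ, Finset.sum_range_zero] at hg0 hg1 hg2 hg3 hQs hSs ⊢
    simp only [hsymm 1 0, hsymm 2 0, hsymm 2 1, hsymm 3 0, hsymm 3 1, hsymm 3 2] at hg1 hg2 hg3
    rw [hSs, hQs]
    linarith
  -- combine
  obtain ⟨hl1, hl2⟩ := hl
  obtain ⟨hm1, hm2⟩ := hm
  set c : ℝ := T ^ 2 / (2 * ((n : ℝ) - 1)) with hc
  set s6 : ℝ := (h 0 1)^2 + (h 0 2)^2 + (h 0 3)^2 + (h 1 2)^2 + (h 1 3)^2 + (h 2 3)^2 with hs6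
  have e02 : c - S/2 ≤ h 0 0 * h 2 2 - s6 := by rw [hc, hs6]; linarith
  have e13 : c - S/2 ≤ h 1 1 * h 3 3 - s6 := by rw [hc, hs6]; linarith
  have e12 : c - S/2 ≤ h 1 1 * h 2 2 - s6 := by rw [hc, hs6]; linarith
  have e03 : c - S/2 ≤ h 0 0 * h 3 3 - s6 := by rw [hc, hs6]; linarith
  have f13 := mul_le_mul_of_nonneg_left e13 (mul_nonneg (sq_nonneg m) (sq_nonneg l))
  have f12 := mul_le_mul_of_nonneg_left e12 (sq_nonneg m)
  have f03 := mul_le_mul_of_nonneg_left e03 (sq_nonneg l)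
  have key : (1 + l ^ 2 + m ^ 2 + l ^ 2 * m ^ 2) * (c - S / 2)
      ≤ (h 0 0 * h 2 2 - s6) + m^2 * l^2 * (h 1 1 * h 3 3 - s6)
        + m^2 * (h 1 1 * h 2 2 - s6) + l^2 * (h 0 0 * h 3 3 - s6) := by nlinarith [e02, f13, f12, f03]
  have quad : (h 0 0 * h 2 2 - s6) + m^2 * l^2 * (h 1 1 * h 3 3 - s6)
        + m^2 * (h 1 1 * h 2 2 - s6) + l^2 * (h 0 0 * h 3 3 - s6)
      ≤ h 0 0 * h 2 2 - (h 0 2) ^ 2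
      + m ^ 2 * l ^ 2 * (h 1 1 * h 3 3 - (h 1 3) ^ 2)
      + m ^ 2 * (h 1 1 * h 2 2 - (h 1 2) ^ 2)
      + l ^ 2 * (h 0 0 * h 3 3 - (h 0 3) ^ 2)
      + 2 * m * l * (h 0 3 * h 1 2) - 2 * m * l * (h 0 2 * h 1 3) := by
    rw [hs6]
    nlinarith [sq_nonneg (h 0 3 + m * l * h 1 2), sq_nonneg (m * h 0 2 - l * h 1 3),
      sq_nonneg (h 0 1), sq_nonneg (h 2 3), sq_nonneg (h 1 2), sq_nonneg (h 1 3),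
      mul_nonneg (sq_nonneg m) (sq_nonneg (h 0 1)),
      mul_nonneg (sq_nonneg l) (sq_nonneg (h 0 1)),
      mul_nonneg (mul_nonneg (sq_nonneg m) (sq_nonneg l)) (sq_nonneg (h 0 1)),
      mul_nonneg (sq_nonneg m) (sq_nonneg (h 2 3)),
      mul_nonneg (sq_nonneg l) (sq_nonneg (h 2 3)),
      mul_nonneg (mul_nonneg (sq_nonneg m) (sq_nonneg l)) (sq_nonneg (h 2 3)),
      mul_nonneg (mul_nonneg (sq_nonneg m) (sq_nonneg l)) (sq_nonneg (h 0 2)),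
      mul_nonneg (sq_nonneg l) (sq_nonneg (h 0 2)),
      mul_nonneg (mul_nonneg (sq_nonneg m) (sq_nonneg l)) (sq_nonneg (h 0 3)),
      mul_nonneg (sq_nonneg m) (sq_nonneg (h 0 3)),
      mul_nonneg (sq_nonneg l) (sq_nonneg (h 1 2)),
      mul_nonneg (sq_nonneg m) (sq_nonneg (h 1 3))]
  exact le_trans key quad
end

section
/- Let n ≥ 4, q an integer with 1 < q < n−1, let h: {1,…,n}² → ℝ^m be symmetric (h_{ik} = h_{ki} as vectors), set S = ∑_{i,k} |h_{ik}|², H·n = |∑_i h_{ii}| where H = |(1/n)∑_i h_{ii}|. Then ∑_{k=q+1}^n ∑_{i=1}^q [2|h_{ik}|² − ⟨h_{ii}, h_{kk}⟩] ≤ (q(n−q)/n)·[S − 2nH² + (n(n−4)/√(2n(n−2)))·H·√(S − nH²)], provided S ≥ nH². -/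
open Finset

open scoped RealInnerProductSpace

lemma aux_norm_sum_sq {E : Type*} [NormedAddCommGroup E] [InnerProductSpace ℝ E]
    (s : Finset ℕ) (v : ℕ → E) :
    ‖∑ i ∈ s, v i‖ ^ 2 ≤ (s.card : ℝ) * ∑ i ∈ s, ‖v i‖ ^ 2 := by
  calc ‖∑ i ∈ s, v i‖ ^ 2 ≤ (∑ i ∈ s, ‖v i‖) ^ 2 :=
        pow_le_pow_left₀ (norm_nonneg _) (norm_sum_le _ _) 2
    _ ≤ (s.card : ℝ) * ∑ i ∈ s, ‖v i‖ ^ 2 := by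
        exact_mod_cast sq_sum_le_card_mul_sum_sq (s := s) (f := fun i => ‖v i‖)

set_option maxHeartbeats 1000000 in
open scoped RealInnerProductSpace in
theorem stmt_17 (E : Type*) [NormedAddCommGroup E] [InnerProductSpace ℝ E]
    (n q : ℕ) (hn : 4 ≤ n) (hq1 : 1 < q) (hq2 : q < n - 1)
    (h : ℕ → ℕ → E) (hsymm : ∀ i k, h i k = h k i)
    (S H : ℝ)
    (hS : S = ∑ i ∈ Finset.range n, ∑ k ∈ Finset.range n, ‖h i k‖ ^ 2)
    (hH : H = ‖∑ i ∈ Finset.range n, h i i‖ / n)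
    (hSH : (n : ℝ) * H ^ 2 ≤ S) :
    ∑ k ∈ Finset.Ico q n, ∑ i ∈ Finset.range q, (2 * ‖h i k‖ ^ 2 - ⟪h i i, h k k⟫)
      ≤ ((q : ℝ) * ((n : ℝ) - q) / n) *
          (S - 2 * n * H ^ 2 +
            ((n : ℝ) * ((n : ℝ) - 4) / Real.sqrt (2 * n * ((n : ℝ) - 2))) * H *
              Real.sqrt (S - n * H ^ 2)) := by
  have hqn : q + 2 ≤ n := by omega
  have hqn' : q ≤ n := by omega
  set N : ℝ := (n : ℝ) with hNdef
  set Q : ℝ := (q : ℝ) with hQdef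
  have hN4 : (4:ℝ) ≤ N := by rw [hNdef]; exact_mod_cast hn
  have hQ2 : (2:ℝ) ≤ Q := by rw [hQdef]; exact_mod_cast hq1
  have hQN : Q + 2 ≤ N := by rw [hQdef, hNdef]; exact_mod_cast hqn
  have hN0 : (0:ℝ) < N := by linarith
  set T : E := ∑ i ∈ Finset.range n, h i i with hTdef
  set b : ℕ → ℕ → E := fun i k => h i k - if i = k then N⁻¹ • T else 0 with hbdef
  have hbne : ∀ i k, i ≠ k → b i k = h i k := by
    intro i k hik; simp [hbdef, if_neg hik]
  have hbsymm : ∀ i k, b i k = b k i := by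
    intro i k
    by_cases hik : i = k
    · subst hik; rfl
    · rw [hbne i k hik, hbne k i (Ne.symm hik), hsymm]
  have hbd : ∀ j, b j j = h j j - N⁻¹ • T := by intro j; simp [hbdef]
  set Δ : ℝ := ∑ j ∈ Finset.range n, ‖b j j‖ ^ 2 with hΔdef
  set C : ℝ := ∑ k ∈ Finset.Ico q n, ∑ i ∈ Finset.range q, ‖h i k‖ ^ 2 with hCdef
  set σ : ℝ := S - ‖T‖ ^ 2 / N with hσdef
  set P : E := ∑ i ∈ Finset.range q, b i i with hPdef
  set X : ℝ := Q * (N - Q) with hXdef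
  -- square of diagonal entries of b
  have hbdsq : ∀ j, ‖b j j‖ ^ 2 = ‖h j j‖ ^ 2 - 2 * N⁻¹ * ⟪h j j, T⟫ + N⁻¹ ^ 2 * ‖T‖ ^ 2 := by
    intro j
    rw [hbd j, @norm_sub_sq_real, real_inner_smul_right, norm_smul, Real.norm_eq_abs,
      abs_of_nonneg (inv_nonneg.mpr hN0.le)]
    ring
  have hsumdiag : ∑ j ∈ Finset.range n, ⟪h j j, T⟫ = ‖T‖ ^ 2 := by
    rw [← sum_inner, ← hTdef, real_inner_self_eq_norm_sq]
  -- Δ in terms of h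
  have hΔeq : Δ = (∑ j ∈ Finset.range n, ‖h j j‖ ^ 2) - ‖T‖ ^ 2 / N := by
    rw [hΔdef]
    rw [Finset.sum_congr rfl fun j _ => hbdsq j]
    rw [Finset.sum_add_distrib, Finset.sum_sub_distrib, ← Finset.mul_sum, hsumdiag,
      Finset.sum_const, Finset.card_range, nsmul_eq_mul]
    field_simp
    ring
  -- total sum of ‖b‖^2 equals σ
  have htot : ∑ j ∈ Finset.range n, ∑ l ∈ Finset.range n, ‖b j l‖ ^ 2 = σ := by
    have hrow : ∀ j ∈ Finset.range n,
        ∑ l ∈ Finset.range n, ‖b j l‖ ^ 2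
          = (∑ l ∈ Finset.range n, ‖h j l‖ ^ 2) + (‖b j j‖ ^ 2 - ‖h j j‖ ^ 2) := by
      intro j hj
      have hsingle : ∑ l ∈ Finset.range n, (‖b j l‖ ^ 2 - ‖h j l‖ ^ 2)
          = ‖b j j‖ ^ 2 - ‖h j j‖ ^ 2 := by
        apply Finset.sum_eq_single_of_mem j hj
        intro l _ hl
        rw [hbne j l (fun hc => hl (hc.symm ▸ rfl))]
        ring
      have := Finset.sum_sub_distrib (s := Finset.range n)
        (f := fun l => ‖b j l‖ ^ 2) (g := fun l => ‖h j l‖ ^ 2)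
      rw [this] at hsingle
      linarith
    rw [Finset.sum_congr rfl hrow, Finset.sum_add_distrib, Finset.sum_sub_distrib, ← hS]
    have : (∑ j ∈ Finset.range n, ‖b j j‖ ^ 2) = Δ := rfl
    rw [this, hΔeq, hσdef]
    ring
  -- cross-block bound : 2C + Δ ≤ σ
  have hCC : 2 * C + Δ ≤ σ := by
    classical
    have hCalt : ∑ i ∈ Finset.range q, ∑ k ∈ Finset.Ico q n, ‖h i k‖ ^ 2 = C := by
      rw [hCdef]; exact Finset.sum_comm
    have hA1 : ∑ p ∈ Finset.range q ×ˢ Finset.Ico q n, ‖b p.1 p.2‖ ^ 2 = C := by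
      rw [Finset.sum_product, ← hCalt]
      refine Finset.sum_congr rfl fun x hx => Finset.sum_congr rfl fun y hy => ?_
      simp only [Finset.mem_range, Finset.mem_Ico] at hx hy
      show ‖b x y‖ ^ 2 = ‖h x y‖ ^ 2
      rw [hbne x y (by omega)]
    have hA2 : ∑ p ∈ Finset.Ico q n ×ˢ Finset.range q, ‖b p.1 p.2‖ ^ 2 = C := by
      rw [Finset.sum_product, hCdef]
      refine Finset.sum_congr rfl fun x hx => Finset.sum_congr rfl fun y hy => ?_
      simp only [Finset.mem_range, Finset.mem_Ico] at hx hy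
      show ‖b x y‖ ^ 2 = ‖h y x‖ ^ 2
      rw [hbsymm x y, hbne y x (by omega)]
    have hA3 : ∑ p ∈ (Finset.range n).image (fun j => (j, j)), ‖b p.1 p.2‖ ^ 2 = Δ := by
      rw [Finset.sum_image (by intro x _ y _ hxy; exact (Prod.ext_iff.mp hxy).1)]
    have d1 : Disjoint (Finset.range q ×ˢ Finset.Ico q n) (Finset.Ico q n ×ˢ Finset.range q) := by
      rw [Finset.disjoint_left]
      intro p hp hp'
      simp only [Finset.mem_product, Finset.mem_range, Finset.mem_Ico] at hp hp'
      omega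
    have d2 : Disjoint ((Finset.range q ×ˢ Finset.Ico q n) ∪ (Finset.Ico q n ×ˢ Finset.range q))
        ((Finset.range n).image (fun j => (j, j))) := by
      rw [Finset.disjoint_left]
      intro p hp hp'
      simp only [Finset.mem_image, Finset.mem_range] at hp'
      obtain ⟨j, hj, rfl⟩ := hp'
      simp only [Finset.mem_union, Finset.mem_product, Finset.mem_range, Finset.mem_Ico] at hp
      omega
    have hsub : (Finset.range q ×ˢ Finset.Ico q n) ∪ (Finset.Ico q n ×ˢ Finset.range q)
        ∪ (Finset.range n).image (fun j => (j, j)) ⊆ Finset.range n ×ˢ Finset.range n := by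
      intro p hp
      simp only [Finset.mem_union, Finset.mem_product, Finset.mem_range, Finset.mem_Ico,
        Finset.mem_image] at hp ⊢
      rcases hp with (⟨h1, h2⟩ | ⟨h1, h2⟩) | ⟨j, hj, rfl⟩
      · omega
      · omega
      · exact ⟨hj, hj⟩
    have hle := Finset.sum_le_sum_of_subset_of_nonneg hsub
      (fun p _ _ => sq_nonneg ‖b p.1 p.2‖)
    rw [Finset.sum_union d2, Finset.sum_union d1, hA1, hA2, hA3] at hle
    rw [Finset.sum_product] at hle
    rw [htot] at hle
    linarith
  -- trace of b is zero
  have hPtot : ∑ j ∈ Finset.range n, b j j = 0 := by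
    have : ∑ j ∈ Finset.range n, b j j = T - n • (N⁻¹ • T) := by
      rw [Finset.sum_congr rfl fun j _ => hbd j, Finset.sum_sub_distrib, ← hTdef,
        Finset.sum_const, Finset.card_range]
    rw [this, ← Nat.cast_smul_eq_nsmul ℝ, smul_smul, ← hNdef, mul_inv_cancel₀ hN0.ne', one_smul,
      sub_self]
  have hsplitb : P + ∑ k ∈ Finset.Ico q n, b k k = 0 := by
    rw [hPdef, Finset.range_eq_Ico, Finset.sum_Ico_consecutive _ (Nat.zero_le q) hqn',
      ← Finset.range_eq_Ico, hPtot]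
  have hPeq : P = -∑ k ∈ Finset.Ico q n, b k k := eq_neg_of_add_eq_zero_left hsplitb
  -- Cauchy-Schwarz bounds on P
  have hP1 : ‖P‖ ^ 2 ≤ Q * ∑ i ∈ Finset.range q, ‖b i i‖ ^ 2 := by
    have := aux_norm_sum_sq (Finset.range q) (fun i => b i i)
    rw [Finset.card_range] at this
    exact this
  have hP2 : ‖P‖ ^ 2 ≤ (N - Q) * ∑ k ∈ Finset.Ico q n, ‖b k k‖ ^ 2 := by
    have haux := aux_norm_sum_sq (Finset.Ico q n) (fun k => b k k)
    have hcard : (((Finset.Ico q n).card : ℕ) : ℝ) = N - Q := by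
      rw [Nat.card_Ico, hNdef, hQdef, Nat.cast_sub hqn']
    rw [hcard] at haux
    rw [hPeq, norm_neg]
    exact haux
  have hΔsplit : (∑ i ∈ Finset.range q, ‖b i i‖ ^ 2)
      + (∑ k ∈ Finset.Ico q n, ‖b k k‖ ^ 2) = Δ := by
    rw [hΔdef, Finset.range_eq_Ico, Finset.range_eq_Ico, ← Finset.sum_Ico_consecutive _ (Nat.zero_le q) hqn',
      ← Finset.range_eq_Ico]
  have hQ0 : (0:ℝ) ≤ Q := by linarith
  have hNQ0 : (0:ℝ) ≤ N - Q := by linarith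
  have hNP : N * ‖P‖ ^ 2 ≤ X * Δ := by
    have h1 := mul_le_mul_of_nonneg_left hP1 hNQ0
    have h2 := mul_le_mul_of_nonneg_left hP2 hQ0
    rw [hXdef, ← hΔsplit]
    linarith [h1, h2]
  have hC0 : (0:ℝ) ≤ C :=
    Finset.sum_nonneg fun k _ => Finset.sum_nonneg fun i _ => sq_nonneg _
  have hΔ0 : (0:ℝ) ≤ Δ := Finset.sum_nonneg fun j _ => sq_nonneg _
  have hΔσ : Δ ≤ σ := by linarith only [hCC, hC0]
  have hσ0 : (0:ℝ) ≤ σ := by linarith only [hΔσ, hΔ0]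
  have hX2N : 2 * N - 4 ≤ X := by
    have hpr := mul_nonneg (by linarith only [hQ2] : (0:ℝ) ≤ Q - 2)
      (by linarith only [hQN] : (0:ℝ) ≤ N - Q - 2)
    rw [hXdef]; linarith only [hpr]
  have hXN : N ≤ X := by linarith only [hX2N, hN4]
  have hX0 : (0:ℝ) ≤ X := by linarith only [hXN, hN0]
  have hPσ : N * ‖P‖ ^ 2 ≤ X * σ :=
    le_trans hNP (mul_le_mul_of_nonneg_left hΔσ hX0)
  -- first main estimate
  have E1 : N * (2 * C + ‖P‖ ^ 2) ≤ X * σ := by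
    have e1 : (X - N) * Δ ≤ (X - N) * σ :=
      mul_le_mul_of_nonneg_left hΔσ (by linarith only [hXN])
    have e2 : N * (2 * C) ≤ N * (σ - Δ) :=
      mul_le_mul_of_nonneg_left (by linarith only [hCC]) hN0.le
    linarith only [e1, e2, hNP]
  -- sqrt facts
  have h2NN : (0:ℝ) < 2 * N * (N - 2) :=
    mul_pos (by linarith only [hN0]) (by linarith only [hN4])
  set s : ℝ := Real.sqrt (2 * N * (N - 2)) with hsdef
  have hs0 : 0 < s := Real.sqrt_pos.2 h2NN
  have hssq : s ^ 2 = 2 * N * (N - 2) := Real.sq_sqrt h2NN.le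
  set r : ℝ := Real.sqrt σ with hrdef
  have hr0 : (0:ℝ) ≤ r := Real.sqrt_nonneg _
  have hrsq : r ^ 2 = σ := Real.sq_sqrt hσ0
  -- the numeric inequality
  have hX2N' : (0:ℝ) ≤ X - 2 * N + 4 := by linarith
  have hnum : (2 * Q - N) ^ 2 * (2 * (N - 2)) ≤ X * (N - 4) ^ 2 := by
    have hkey : (2 * Q - N) ^ 2 = N ^ 2 - 4 * X := by rw [hXdef]; ring
    have hpr := mul_nonneg (sq_nonneg N) hX2N'
    rw [hkey]
    linarith only [hpr]
  -- key estimate with sqrt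
  have hkeysq : (|2 * Q - N| * ‖P‖ * s) ^ 2 ≤ (X * (N - 4) * r) ^ 2 := by
    have hexp1 : (|2 * Q - N| * ‖P‖ * s) ^ 2 = ((2 * Q - N) ^ 2 * (2 * (N - 2))) * (N * ‖P‖ ^ 2) := by
      rw [mul_pow, mul_pow, sq_abs, hssq]
      ring
    have hexp2 : (X * (N - 4) * r) ^ 2 = (X * (N - 4) ^ 2) * (X * σ) := by
      rw [mul_pow, mul_pow, hrsq]; ring
    rw [hexp1, hexp2]
    apply mul_le_mul hnum hPσ (mul_nonneg hN0.le (sq_nonneg _))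
    exact mul_nonneg hX0 (sq_nonneg _)
  have hkey : |2 * Q - N| * ‖P‖ * s ≤ X * (N - 4) * r := by
    have ha : (0:ℝ) ≤ |2 * Q - N| * ‖P‖ * s := by positivity
    have hb : (0:ℝ) ≤ X * (N - 4) * r :=
      mul_nonneg (mul_nonneg hX0 (by linarith)) hr0
    exact (pow_le_pow_iff_left₀ ha hb (by norm_num)).mp hkeysq
  -- second main estimate
  have E2 : ((2 * Q - N) * ⟪P, T⟫) * s ≤ X * (N - 4) * (‖T‖ * r) := by
    calc ((2 * Q - N) * ⟪P, T⟫) * s ≤ (|2 * Q - N| * (‖P‖ * ‖T‖)) * s := by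
          apply mul_le_mul_of_nonneg_right _ hs0.le
          calc (2 * Q - N) * ⟪P, T⟫ ≤ |(2 * Q - N) * ⟪P, T⟫| := le_abs_self _
            _ = |2 * Q - N| * |⟪P, T⟫| := abs_mul _ _
            _ ≤ |2 * Q - N| * (‖P‖ * ‖T‖) :=
                mul_le_mul_of_nonneg_left (abs_real_inner_le_norm P T) (abs_nonneg _)
      _ = (|2 * Q - N| * ‖P‖ * s) * ‖T‖ := by ring
      _ ≤ (X * (N - 4) * r) * ‖T‖ := mul_le_mul_of_nonneg_right hkey (norm_nonneg T)
      _ = X * (N - 4) * (‖T‖ * r) := by ring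
  -- combined big inequality
  have hbig : N * s * (2 * C + ‖P‖ ^ 2) + s * ((2 * Q - N) * ⟪P, T⟫)
      ≤ X * σ * s + X * (N - 4) * (‖T‖ * r) := by
    have hE1s := mul_le_mul_of_nonneg_right E1 hs0.le
    linarith only [hE1s, E2]
  -- express the LHS of the goal
  set A : E := ∑ i ∈ Finset.range q, h i i with hAdef
  have hsplit_h : ∑ k ∈ Finset.Ico q n, h k k = T - A := by
    have : A + ∑ k ∈ Finset.Ico q n, h k k = T := by
      rw [hAdef, hTdef, Finset.range_eq_Ico, Finset.range_eq_Ico,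
        ← Finset.sum_Ico_consecutive _ (Nat.zero_le q) hqn', ← Finset.range_eq_Ico]
    linear_combination (norm := module) this
  have hinner : ∑ k ∈ Finset.Ico q n, ∑ i ∈ Finset.range q, ⟪h i i, h k k⟫
      = ⟪A, T - A⟫ := by
    rw [← hsplit_h, inner_sum]
    exact Finset.sum_congr rfl fun k _ => (sum_inner _ _ _).symm
  have hLHS1 : ∑ k ∈ Finset.Ico q n, ∑ i ∈ Finset.range q,
      (2 * ‖h i k‖ ^ 2 - ⟪h i i, h k k⟫) = 2 * C - ⟪A, T - A⟫ := by
    have hrow : ∀ k ∈ Finset.Ico q n,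
        ∑ i ∈ Finset.range q, (2 * ‖h i k‖ ^ 2 - ⟪h i i, h k k⟫)
          = 2 * ∑ i ∈ Finset.range q, ‖h i k‖ ^ 2
            - ∑ i ∈ Finset.range q, ⟪h i i, h k k⟫ := by
      intro k _
      rw [Finset.sum_sub_distrib, Finset.mul_sum]
    rw [Finset.sum_congr rfl hrow, Finset.sum_sub_distrib, ← Finset.mul_sum, hinner, hCdef]
  have hA_P : A = P + (Q / N) • T := by
    have hP' : P = A - (Q / N) • T := by
      rw [hPdef, Finset.sum_congr rfl fun i _ => hbd i, Finset.sum_sub_distrib,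
        Finset.sum_const, Finset.card_range, ← hAdef]
      congr 1
      rw [← Nat.cast_smul_eq_nsmul ℝ, smul_smul, ← hQdef, div_eq_mul_inv]
    rw [hP']
    abel
  have hexp : ⟪A, T - A⟫ = (1 - 2 * (Q / N)) * ⟪P, T⟫ - ‖P‖ ^ 2
      + (Q / N) * (1 - Q / N) * ‖T‖ ^ 2 := by
    have hTA : T - A = (1 - Q / N) • T - P := by
      rw [hA_P, sub_smul, one_smul]
      abel
    rw [hTA, hA_P]
    simp only [inner_add_left, inner_sub_right, real_inner_smul_left, real_inner_smul_right,
      real_inner_self_eq_norm_sq]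
    rw [real_inner_comm T P]
    ring
  -- rewrite the goal
  have hNH2 : N * H ^ 2 = ‖T‖ ^ 2 / N := by
    rw [hH, div_pow]
    field_simp
  have hargσ : S - N * H ^ 2 = σ := by
    rw [hNH2, hσdef]
  have hSσ : S = σ + ‖T‖ ^ 2 / N := by
    rw [hσdef]; ring
  rw [hLHS1, hexp, hargσ, ← hrdef, hH, hSσ]
  have key1 : 2 * C - ((1 - 2 * (Q / N)) * ⟪P, T⟫ - ‖P‖ ^ 2
        + (Q / N) * (1 - Q / N) * ‖T‖ ^ 2)
      = (N * s * (2 * C + ‖P‖ ^ 2) + s * ((2 * Q - N) * ⟪P, T⟫)) / (N * s)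
        - X / N ^ 2 * ‖T‖ ^ 2 := by
    rw [hXdef]
    field_simp
    ring
  have key2 : Q * (N - Q) / N * (σ + ‖T‖ ^ 2 / N - 2 * N * (‖T‖ / N) ^ 2
        + N * (N - 4) / s * (‖T‖ / N) * r)
      = (X * σ * s + X * (N - 4) * (‖T‖ * r)) / (N * s) - X / N ^ 2 * ‖T‖ ^ 2 := by
    rw [hXdef]
    field_simp
    ring
  rw [key1, key2]
  have hdiv : (N * s * (2 * C + ‖P‖ ^ 2) + s * ((2 * Q - N) * ⟪P, T⟫)) / (N * s)
      ≤ (X * σ * s + X * (N - 4) * (‖T‖ * r)) / (N * s) := by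
    apply div_le_div_of_nonneg_right hbig (by positivity)
  linarith only [hdiv]
end
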